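/- Subject head of the PT construction (β→∞ limit): Consider the subject head with weights W_KQ^subj = β(Σ_{j=1}^M E(s_j))E([sep])^T and W_OV^subj = -Σ_{j=1}^M (Σ_{u∈U, u∉A_j} E(u)) E(s_j)^T. For every PT sequence X with subject s_{j*}, as β→∞ the attention at the last position distributes uniformly over the subject positions (all of which carry the token s_{j*}), so that lim_{β→∞} g_subj(X) = E(s_{j*}) and lim_{β→∞} W_OV^subj g_subj(X) = -(Σ_{u∈U} E(u) - Σ_{l=1}^L E(a_{j*}^l)), i.e., the head outputs the negative sum of all attribute tokens not associated with subject s_{j*}. -/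

import Mathlib

open Filter Topology Finset Matrix

namespace CR

/-- Vocabulary tokens: `M` subjects, `L` attribute types each with `U` values,
`G` grammar tokens, `L` relation tokens, and a separator. -/
inductive Tok (M L U G : ℕ) : Type where
  | subj : Fin M → Tok M L U G
  | attr : Fin L → Fin U → Tok M L U G
  | gram : Fin G → Tok M L U G
  | rel  : Fin L → Tok M L U G
  | sep  : Tok M L U G
deriving DecidableEq, Fintype

/-- Embedding dimension: one coordinate per vocabulary token plus `P` positional coordinates. -/
abbrev Dim (M L U G P : ℕ) := Tok M L U G ⊕ Fin P

abbrev Vec (M L U G P : ℕ) := Dim M L U G P → ℝ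

variable {M L U G P : ℕ}

/-- One-hot token embedding `E(v)`. -/
def E (v : Tok M L U G) : Vec M L U G P :=
  fun i => if i = Sum.inl v then 1 else 0

/-- One-hot positional encoding for relative position `-k`
(`pos 0 = E(p₀)`, `pos 1 = E(p₋₁)`, ...); zero if `k ≥ P`. -/
def pos (k : ℕ) : Vec M L U G P :=
  fun i => match i with
  | Sum.inl _ => 0
  | Sum.inr j => if (j : ℕ) = k then 1 else 0

/-- Softmax attention weight of (0-indexed) row `j` among rows `0,…,t-1`, with query row `t-1`;
row `i` carries the relative positional encoding `p_{-(t-1-i)}`. -/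
noncomputable def attn (W : Matrix (Dim M L U G P) (Dim M L U G P) ℝ)
    (X : ℕ → Vec M L U G P) (t j : ℕ) : ℝ :=
  Real.exp ((X j + pos (t - 1 - j)) ⬝ᵥ W.mulVec (X (t - 1))) /
    ∑ i ∈ Finset.range t, Real.exp ((X i + pos (t - 1 - i)) ⬝ᵥ W.mulVec (X (t - 1)))

/-- Attention-head output `g_h^t(X)` (attention over the first `t` rows, query at row `t-1`). -/
noncomputable def gHead (W : Matrix (Dim M L U G P) (Dim M L U G P) ℝ)
    (X : ℕ → Vec M L U G P) (t : ℕ) : Vec M L U G P :=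
  ∑ j ∈ Finset.range t, attn W X t j • X j

/-- Token at (0-indexed) position `t` of a PT sequence with subject `jstar`:
block `k` occupies positions `k(S+3),…,k(S+3)+S+1` (subject, `S` middle tokens, separator),
followed (except after the last block) by the attribute `a_{jstar}^{ltype k}`. -/
def ptTok (S : ℕ) (jstar : Fin M) (ltype : ℕ → Fin L)
    (mid : ℕ → ℕ → Tok M L U G) (a : Fin M → Fin L → Fin U) (t : ℕ) : Tok M L U G :=
  let k := t / (S + 3)
  let r := t % (S + 3)
  if r = 0 then Tok.subj jstar
  else if r ≤ S then mid k (r - 1)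
  else if r = S + 1 then Tok.sep
  else Tok.attr (ltype k) (a jstar (ltype k))

/-- Token at (0-indexed) position `t` of an ICL sequence with shared attribute type `lstar`
and subjects `js 0, js 1, …`: the pattern is subject, separator, attribute, subject, … -/
def iclTok (a : Fin M → Fin L → Fin U) (js : ℕ → Fin M) (lstar : Fin L) (t : ℕ) :
    Tok M L U G :=
  if t % 3 = 0 then Tok.subj (js (t / 3))
  else if t % 3 = 1 then Tok.sep
  else Tok.attr lstar (a (js (t / 3)) lstar)


lemma dot_E_E (v w : Tok M L U G) : (E v : Vec M L U G P) ⬝ᵥ E w = if v = w then 1 else 0 := by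
  simp [dotProduct, E, ite_and, eq_comm]

lemma pos_dot_E (k : ℕ) (v : Tok M L U G) : (pos k : Vec M L U G P) ⬝ᵥ E v = 0 := by
  simp [dotProduct, pos, E]

lemma dotProduct_sum' {ι : Type*} (v : Vec M L U G P) (s : Finset ι) (f : ι → Vec M L U G P) :
    v ⬝ᵥ (∑ i ∈ s, f i) = ∑ i ∈ s, v ⬝ᵥ f i := by
  simp only [dotProduct, Finset.sum_apply, Finset.mul_sum]
  exact Finset.sum_comm

lemma sum_dotProduct' {ι : Type*} (v : Vec M L U G P) (s : Finset ι) (f : ι → Vec M L U G P) :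
    (∑ i ∈ s, f i) ⬝ᵥ v = ∑ i ∈ s, f i ⬝ᵥ v := by
  simp only [dotProduct, Finset.sum_apply, Finset.sum_mul]
  exact Finset.sum_comm

lemma sum_mulVec' {ι : Type*} (s : Finset ι)
    (A : ι → Matrix (Dim M L U G P) (Dim M L U G P) ℝ) (x : Vec M L U G P) :
    (∑ i ∈ s, A i).mulVec x = ∑ i ∈ s, (A i).mulVec x := by
  funext j
  simp only [Matrix.mulVec, dotProduct, Finset.sum_apply, Matrix.sum_apply, Finset.sum_mul]
  exact Finset.sum_comm

lemma vecMulVec_mulVec' (w v x : Vec M L U G P) :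
    (Matrix.vecMulVec w v).mulVec x = (v ⬝ᵥ x) • w := by
  funext i
  simp only [Matrix.mulVec, Matrix.vecMulVec, dotProduct, Matrix.of_apply, Pi.smul_apply,
    smul_eq_mul]
  rw [Finset.sum_mul]
  exact Finset.sum_congr rfl fun j _ => by ring

/-- Subject head of the PT construction (β→∞ limit). -/
theorem subject_head_PT_limit
    (M L U G P S N : ℕ) (hN : 0 < N) (hP : N * (S + 3) - 1 ≤ P)
    (a : Fin M → Fin L → Fin U) (jstar : Fin M) (ltype : ℕ → Fin L)
    (mid : ℕ → ℕ → Tok M L U G) (relIdx : ℕ → ℕ)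
    (hmid : ∀ k < N, relIdx k < S ∧ mid k (relIdx k) = Tok.rel (ltype k) ∧
      ∀ i < S, i ≠ relIdx k → ∃ g : Fin G, mid k i = Tok.gram g)
    (X : ℕ → Vec M L U G P) (hX : ∀ t, X t = E (ptTok S jstar ltype mid a t))
    (T : ℕ) (hT : T = N * (S + 3) - 1)
    (WKQ0 WOV : Matrix (Dim M L U G P) (Dim M L U G P) ℝ)
    (hKQ : WKQ0 = Matrix.vecMulVec (∑ j : Fin M, E (Tok.subj j)) (E Tok.sep))
    (hOV : WOV = -(∑ j : Fin M, Matrix.vecMulVec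
      (∑ l : Fin L, ∑ u ∈ Finset.univ.erase (a j l), E (Tok.attr l u))
      (E (Tok.subj j)))) :
    Filter.Tendsto (fun β : ℝ => gHead (β • WKQ0) X T) Filter.atTop
      (𝓝 (E (Tok.subj jstar))) ∧
    Filter.Tendsto (fun β : ℝ => WOV.mulVec (gHead (β • WKQ0) X T)) Filter.atTop
      (𝓝 (-((∑ l : Fin L, ∑ u : Fin U, E (Tok.attr l u))
            - ∑ l : Fin L, E (Tok.attr l (a jstar l))))) := by
  -- the last token is [sep]
  have hTN : N ≤ T ∧ 2 ≤ T := by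
    have h3 : N * (S + 3) = N * S + 3 * N := by ring
    omega
  have hsep : ptTok S jstar ltype mid a (T - 1) = Tok.sep := by
    have h1 : T - 1 = (S + 3) * (N - 1) + (S + 1) := by
      obtain ⟨n, rfl⟩ : ∃ n, N = n + 1 := ⟨N - 1, by omega⟩
      have h3 : (n + 1) * (S + 3) = (S + 3) * n + (S + 3) := by ring
      simp only [Nat.succ_sub_one]
      omega
    have h2 : (T - 1) % (S + 3) = S + 1 := by
      rw [h1, Nat.mul_add_mod]
      exact Nat.mod_eq_of_lt (by omega)
    simp [ptTok, h2]
  -- subject positions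
  have hsubj : ∀ i, i % (S + 3) = 0 → ptTok S jstar ltype mid a i = Tok.subj jstar := by
    intro i hi
    simp [ptTok, hi]
  have hnot : ∀ i < T, i % (S + 3) ≠ 0 →
      ∀ j : Fin M, ptTok S jstar ltype mid a i ≠ Tok.subj j := by
    intro i hiT hi j
    have hk : i / (S + 3) < N := by
      rw [Nat.div_lt_iff_lt_mul (by omega)]
      have h4 : (S + 3) * N = N * (S + 3) := Nat.mul_comm _ _
      omega
    have hr : i % (S + 3) < S + 3 := Nat.mod_lt _ (by omega)
    simp only [ptTok]
    rw [if_neg hi]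
    by_cases h1 : i % (S + 3) ≤ S
    · rw [if_pos h1]
      obtain ⟨hri, hrel, hgram⟩ := hmid _ hk
      by_cases h2 : i % (S + 3) - 1 = relIdx (i / (S + 3))
      · rw [h2, hrel]; simp
      · obtain ⟨g, hg⟩ := hgram _ (by omega) h2
        rw [hg]; simp
    · rw [if_neg h1]
      by_cases h2 : i % (S + 3) = S + 1
      · rw [if_pos h2]; simp
      · rw [if_neg h2]; simp
  -- the filter of subject positions
  set F : Finset ℕ := (Finset.range T).filter (fun i => i % (S + 3) = 0) with hF
  have hcard : F.card = N := by
    have himg : F = (Finset.range N).image (· * (S + 3)) := by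
      ext i
      simp only [hF, Finset.mem_filter, Finset.mem_range, Finset.mem_image]
      constructor
      · rintro ⟨hiT, hi⟩
        refine ⟨i / (S + 3), ?_, Nat.div_mul_cancel (Nat.dvd_of_mod_eq_zero hi)⟩
        rw [Nat.div_lt_iff_lt_mul (by omega)]
        have h4 : (S + 3) * N = N * (S + 3) := Nat.mul_comm _ _
        omega
      · rintro ⟨k, hk, rfl⟩
        have : k * (S + 3) + (S + 3) ≤ N * (S + 3) := by
          rw [← Nat.add_one_mul]
          exact Nat.mul_le_mul_right _ hk
        exact ⟨by omega, by simp [Nat.mul_mod_left]⟩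
    rw [himg, Finset.card_image_of_injective _ (fun x y h => by
      exact Nat.eq_of_mul_eq_mul_right (by omega) h), Finset.card_range]
  -- score computation
  have hscore : ∀ β : ℝ, ∀ i < T,
      (X i + pos (T - 1 - i)) ⬝ᵥ (β • WKQ0).mulVec (X (T - 1)) =
        if i % (S + 3) = 0 then β else 0 := by
    intro β i hiT
    rw [Matrix.smul_mulVec, hKQ, vecMulVec_mulVec', hX (T - 1), hsep, dot_E_E,
      if_pos rfl, one_smul]
    rw [dotProduct_smul, add_dotProduct, hX i]
    rw [dotProduct_sum', dotProduct_sum']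
    simp only [dot_E_E, pos_dot_E, Finset.sum_const_zero, add_zero, smul_eq_mul]
    by_cases hi : i % (S + 3) = 0
    · rw [if_pos hi]
      rw [hsubj i hi]
      rw [Finset.sum_eq_single jstar]
      · simp
      · intro b _ hb
        rw [if_neg (by simp [hb.symm])]
      · simp
    · rw [if_neg hi]
      rw [Finset.sum_eq_zero, mul_zero]
      intro b _
      rw [if_neg (hnot i hiT hi b)]
  -- denominator
  set C : ℝ := ((T - N : ℕ) : ℝ) with hC
  have hCnn : 0 ≤ C := Nat.cast_nonneg _
  set D : ℝ → ℝ := fun β => N * Real.exp β + C with hD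
  have hDpos : ∀ β, 0 < D β := by
    intro β
    have : (0:ℝ) < N := by exact_mod_cast hN
    have := Real.exp_pos β
    positivity
  have hdenom : ∀ β : ℝ,
      ∑ i ∈ Finset.range T, Real.exp ((X i + pos (T - 1 - i)) ⬝ᵥ (β • WKQ0).mulVec (X (T - 1)))
        = D β := by
    intro β
    rw [Finset.sum_congr rfl (fun i hi => by
      rw [hscore β i (Finset.mem_range.mp hi)])]
    simp only [apply_ite Real.exp, Real.exp_zero]
    rw [Finset.sum_ite, Finset.sum_const, Finset.sum_const]
    rw [← hF]
    have hcc : ((Finset.range T).filter (fun i => ¬ i % (S + 3) = 0)).card = T - N := by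
      have := Finset.card_filter_add_card_filter_not
        (s := Finset.range T) (p := fun i => i % (S + 3) = 0)
      rw [← hF] at this
      simp only [Finset.card_range] at this
      omega
    rw [hcard, hcc, hD, hC]
    simp [Real.exp_zero, mul_comm]
  -- gHead formula
  set Y : Vec M L U G P :=
    ∑ i ∈ (Finset.range T).filter (fun i => ¬ i % (S + 3) = 0), X i with hY
  have hgh : ∀ β : ℝ, gHead (β • WKQ0) X T =
      (N * Real.exp β / D β) • E (Tok.subj jstar) + (1 / D β) • Y := by
    intro β
    rw [gHead]
    have hsplit : ∀ j ∈ Finset.range T, attn (β • WKQ0) X T j • X j =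
        if j % (S + 3) = 0 then (Real.exp β / D β) • E (Tok.subj jstar)
        else (1 / D β) • X j := by
      intro j hj
      rw [attn, hdenom β, hscore β j (Finset.mem_range.mp hj)]
      by_cases h : j % (S + 3) = 0
      · rw [if_pos h, if_pos h, hX j, hsubj j h]
      · rw [if_neg h, if_neg h, Real.exp_zero]
    rw [Finset.sum_congr rfl hsplit, Finset.sum_ite, ← hF, Finset.sum_const, hcard,
      ← Finset.smul_sum, ← hY]
    congr 1
    rw [← Nat.cast_smul_eq_nsmul ℝ, smul_smul]
    congr 1
    ring
  -- limits
  have hDtop : Tendsto D atTop atTop := by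
    have : (0:ℝ) < N := by exact_mod_cast hN
    exact Tendsto.atTop_add (Real.tendsto_exp_atTop.const_mul_atTop this) tendsto_const_nhds
  have h1 : Tendsto (fun β => 1 / D β) atTop (𝓝 0) := by
    simpa [one_div, Pi.inv_def] using hDtop.inv_tendsto_atTop
  have h2 : Tendsto (fun β => N * Real.exp β / D β) atTop (𝓝 1) := by
    have heq : ∀ β, N * Real.exp β / D β = 1 - C * (1 / D β) := by
      intro β
      field_simp [(hDpos β).ne']
      simp [hD]
    rw [show (1:ℝ) = 1 - C * 0 by ring]
    exact Tendsto.congr (fun β => (heq β).symm) (tendsto_const_nhds.sub ((h1.const_mul C)))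
  have hmain : Tendsto (fun β : ℝ => gHead (β • WKQ0) X T) atTop (𝓝 (E (Tok.subj jstar))) := by
    have := (h2.smul_const (E (Tok.subj jstar) : Vec M L U G P)).add
      (h1.smul_const Y)
    simp only [one_smul, zero_smul, add_zero] at this
    exact Tendsto.congr (fun β => (hgh β).symm) this
  refine ⟨hmain, ?_⟩
  have hcont : Continuous (WOV.mulVec : Vec M L U G P → Vec M L U G P) :=
    LinearMap.continuous_of_finiteDimensional (Matrix.mulVecLin WOV)
  have hcomp := (hcont.tendsto _).comp hmain
  have hval : WOV.mulVec (E (Tok.subj jstar)) =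
      -((∑ l : Fin L, ∑ u : Fin U, E (Tok.attr l u))
            - ∑ l : Fin L, E (Tok.attr l (a jstar l))) := by
    rw [hOV, Matrix.neg_mulVec]
    have hsum : (∑ j : Fin M, Matrix.vecMulVec
        (∑ l : Fin L, ∑ u ∈ Finset.univ.erase (a j l), E (Tok.attr l u))
        (E (Tok.subj j) : Vec M L U G P)).mulVec (E (Tok.subj jstar)) =
        (∑ l : Fin L, ∑ u ∈ Finset.univ.erase (a jstar l), E (Tok.attr l u) : Vec M L U G P) := by
      rw [sum_mulVec']
      simp only [vecMulVec_mulVec', dot_E_E]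
      rw [Finset.sum_eq_single jstar]
      · simp
      · intro b _ hb
        rw [if_neg (by simp [hb]), zero_smul]
      · simp
    rw [hsum]
    congr 1
    rw [← Finset.sum_sub_distrib]
    exact Finset.sum_congr rfl fun l _ => Finset.sum_erase_eq_sub (Finset.mem_univ _)
  simpa [Function.comp_def, hval] using hcomp


end CR
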